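/- Suppose the corner equation (E) and the superposition formulas (S1), (S2) hold for all k ∈ ℤ/Nℤ, and assume that λ·e^{x̂_k} ≠ μ·e^{x̃_k} for all k. Define the Lagrangian Λ(u,v;ν) = (1/ν)·∑_{k∈ℤ/Nℤ}(e^{v_k−u_k} − 1 − (v_k−u_k)) − ν·∑_{k∈ℤ/Nℤ} e^{u_{k+1}−v_k} for fields u,v : ℤ/Nℤ → ℝ and a nonzero parameter ν. Then the discrete multi-time Lagrangian 1-form is closed: Λ(x,x̃;λ) + Λ(x̃,x̂̃;μ) − Λ(x,x̂;μ) − Λ(x̂,x̂̃;λ) = 0. -/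

import Mathlib

private lemma toda_key (lam mu a b c Y a₁ b₁ : ℝ) (hlam : lam ≠ 0) (hmu : mu ≠ 0)
    (ha : a ≠ 0) (hb : b ≠ 0) (hY : Y ≠ 0)
    (h1 : (1/lam)*(c/b - 1) - (1/mu)*(c/a - 1) + lam*(Y/a) - mu*(Y/b) = 0)
    (h2 : (1/lam)*(a₁/Y - 1) + lam*(Y/a) = (1/mu)*(b₁/Y - 1) + mu*(Y/b)) :
    c*(mu*a - lam*b)*Y = a*b*(mu*a₁ - lam*b₁) := by
  field_simp at h1 h2
  have g1 : c*(mu*a-lam*b) - lam*mu*Y*(mu*a-lam*b) + (lam-mu)*(a*b) = 0 := by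
    apply mul_left_cancel₀ (mul_ne_zero ha hb)
    rw [mul_zero]; linear_combination (a*b)*h1
  have g2 : a*b*(mu*a₁ - lam*b₁) + (lam-mu)*(a*b)*Y - lam*mu*Y^2*(mu*a-lam*b) = 0 := by
    apply mul_left_cancel₀ hY
    rw [mul_zero]; linear_combination Y*h2
  linear_combination Y*g1 - g2

/-- The discrete-time Lagrangian of the Bäcklund transformation for the
periodic Toda lattice. -/
noncomputable def todaLagrangian (N : ℕ) [NeZero N] (u v : ZMod N → ℝ) (nu : ℝ) : ℝ :=
  (1 / nu) * ∑ k : ZMod N, (Real.exp (v k - u k) - 1 - (v k - u k))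
    - nu * ∑ k : ZMod N, Real.exp (u (k + 1) - v k)

/-- Closure of the discrete multi-time Lagrangian 1-form for the
Toda lattice. -/
theorem toda_closure
    (N : ℕ) [NeZero N] (x xt xh xth : ZMod N → ℝ) (lam mu : ℝ)
    (hlam : lam ≠ 0) (hmu : mu ≠ 0) (hlm : lam ≠ mu)
    (hE : ∀ k : ZMod N,
      (1 / lam) * (Real.exp (xt k - x k) - 1) + lam * Real.exp (x k - xt (k - 1)) =
      (1 / mu) * (Real.exp (xh k - x k) - 1) + mu * Real.exp (x k - xh (k - 1)))
    (hS1 : ∀ k : ZMod N,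
      (1 / lam) * (Real.exp (xth k - xh k) - 1) - (1 / mu) * (Real.exp (xth k - xt k) - 1)
        + lam * Real.exp (x (k + 1) - xt k) - mu * Real.exp (x (k + 1) - xh k) = 0)
    (hS2 : ∀ k : ZMod N,
      (1 / lam) * (Real.exp (xt (k + 1) - x (k + 1)) - 1)
        - (1 / mu) * (Real.exp (xh (k + 1) - x (k + 1)) - 1)
        + lam * Real.exp (xh (k + 1) - xth k) - mu * Real.exp (xt (k + 1) - xth k) = 0)
    (hnd : ∀ k : ZMod N, lam * Real.exp (xh k) ≠ mu * Real.exp (xt k)) :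
    todaLagrangian N x xt lam + todaLagrangian N xt xth mu
      - todaLagrangian N x xh mu - todaLagrangian N xh xth lam = 0 := by
  have hP : ∀ k : ZMod N, mu * Real.exp (xt k) - lam * Real.exp (xh k) ≠ 0 :=
    fun k => sub_ne_zero_of_ne (hnd k).symm
  have hkey : ∀ k : ZMod N,
      Real.exp (xth k) * (mu * Real.exp (xt k) - lam * Real.exp (xh k)) * Real.exp (x (k+1)) =
      Real.exp (xt k) * Real.exp (xh k) *
        (mu * Real.exp (xt (k+1)) - lam * Real.exp (xh (k+1))) := by
    intro k
    have h1 := hS1 k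
    have h2 := hE (k+1)
    rw [show (k + 1 - 1 : ZMod N) = k from add_sub_cancel_right k 1] at h2
    simp only [Real.exp_sub] at h1 h2
    exact toda_key lam mu _ _ _ _ _ _ hlam hmu (Real.exp_ne_zero _) (Real.exp_ne_zero _)
      (Real.exp_ne_zero _) h1 h2
  have hstep : ∀ k : ZMod N, xth k + x (k + 1) - xt k - xh k =
      Real.log |mu * Real.exp (xt (k+1)) - lam * Real.exp (xh (k+1))| -
      Real.log |mu * Real.exp (xt k) - lam * Real.exp (xh k)| := by
    intro k
    have hr : mu * Real.exp (xt (k+1)) - lam * Real.exp (xh (k+1)) =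
        (mu * Real.exp (xt k) - lam * Real.exp (xh k)) *
          Real.exp (xth k + x (k+1) - xt k - xh k) := by
      rw [show xth k + x (k+1) - xt k - xh k = xth k + x (k+1) - (xt k + xh k) by ring,
          Real.exp_sub, Real.exp_add, Real.exp_add]
      field_simp
      linear_combination -hkey k
    rw [hr, abs_mul, Real.abs_exp,
      Real.log_mul (abs_ne_zero.mpr (hP k)) (Real.exp_ne_zero _), Real.log_exp]
    ring
  have hlog : ∑ k : ZMod N, Real.log |mu * Real.exp (xt (k+1)) - lam * Real.exp (xh (k+1))| =
      ∑ k : ZMod N, Real.log |mu * Real.exp (xt k) - lam * Real.exp (xh k)| :=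
    Fintype.sum_equiv (Equiv.addRight (1 : ZMod N)) _ _ (fun k => rfl)
  have htel : ∑ k : ZMod N, (xth k + x (k + 1) - xt k - xh k) = 0 := by
    rw [Finset.sum_congr rfl (fun k _ => hstep k), Finset.sum_sub_distrib, hlog, sub_self]
  have hx : ∑ k : ZMod N, x (k + 1) = ∑ k : ZMod N, x k :=
    Fintype.sum_equiv (Equiv.addRight (1 : ZMod N)) _ _ (fun k => rfl)
  have r1 : ∑ k : ZMod N, Real.exp (xt (k+1) - x (k+1)) = ∑ k : ZMod N, Real.exp (xt k - x k) :=
    Fintype.sum_equiv (Equiv.addRight (1 : ZMod N)) _ _ (fun k => rfl)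
  have r2 : ∑ k : ZMod N, Real.exp (xh (k+1) - x (k+1)) = ∑ k : ZMod N, Real.exp (xh k - x k) :=
    Fintype.sum_equiv (Equiv.addRight (1 : ZMod N)) _ _ (fun k => rfl)
  have hA : ∑ k : ZMod N,
      ((1 / lam) * (Real.exp (xth k - xh k) - 1) - (1 / mu) * (Real.exp (xth k - xt k) - 1)
        + lam * Real.exp (x (k + 1) - xt k) - mu * Real.exp (x (k + 1) - xh k)) = 0 :=
    Finset.sum_eq_zero (fun k _ => hS1 k)
  have hB : ∑ k : ZMod N,
      ((1 / lam) * (Real.exp (xt (k + 1) - x (k + 1)) - 1)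
        - (1 / mu) * (Real.exp (xh (k + 1) - x (k + 1)) - 1)
        + lam * Real.exp (xh (k + 1) - xth k) - mu * Real.exp (xt (k + 1) - xth k)) = 0 :=
    Finset.sum_eq_zero (fun k _ => hS2 k)
  unfold todaLagrangian
  simp only [Finset.sum_add_distrib, Finset.sum_sub_distrib, ← Finset.mul_sum] at hA hB htel ⊢
  linear_combination hB - hA + (1/lam - 1/mu) * htel + (1/mu - 1/lam) * hx
    - (1/lam) * r1 + (1/mu) * r2
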